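/- Let a > 0 and let r_c > 0 be defined by sinh²r_c = 1. On the open set U = {(t,r,φ,z) ∈ ℝ⁴ : r > r_c} consider the Gödel metric with nonzero components g_{00} = a², g_{02} = g_{20} = a²·√2·sinh²r, g_{22} = a²·sinh²r·(sinh²r − 1), g_{11} = g_{33} = −a² (coordinates x⁰=t, x¹=r, x²=φ, x³=z), and the vector field v^μ = (0, 0, 1/(a sinh r √(sinh²r − 1)), 0). Then: (i) Σ_{μ,ν} g_{μν} v^μ v^ν = 1; and (ii) the acceleration a_μ = Σ_ν v^ν (∂_ν v_μ − Σ_ε Γ^ε_{μν} v_ε) equals (0, −cosh r (2 sinh²r − 1)/(sinh r (sinh²r − 1)), 0, 0), which is the gradient ∂_μ Ψ of Ψ = −ln(sinh r · √(sinh²r − 1)). -/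

import Mathlib

open scoped BigOperators

/-- Partial derivative with respect to the μ-th coordinate of ℝ⁴. -/
noncomputable def pd (μ : Fin 4) (f : (Fin 4 → ℝ) → ℝ) (x : Fin 4 → ℝ) : ℝ :=
  fderiv ℝ f x (Pi.single μ 1)

/-- Christoffel symbols `Γ^ε_{μν}` of a metric field `g`. -/
noncomputable def christoffel (g : (Fin 4 → ℝ) → Matrix (Fin 4) (Fin 4) ℝ)
    (ε μ ν : Fin 4) (x : Fin 4 → ℝ) : ℝ :=
  (1 / 2) * ∑ α, (g x)⁻¹ ε α *
    (pd ν (fun y => g y α μ) x + pd μ (fun y => g y α ν) x - pd α (fun y => g y μ ν) x)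

/-- Covariant components `v_μ = g_{μν} v^ν` of a vector field. -/
noncomputable def vlow (g : (Fin 4 → ℝ) → Matrix (Fin 4) (Fin 4) ℝ)
    (v : (Fin 4 → ℝ) → Fin 4 → ℝ) (μ : Fin 4) (x : Fin 4 → ℝ) : ℝ :=
  ∑ ν, g x μ ν * v x ν

/-- Acceleration covector `a_μ = v^ν (∂_ν v_μ − Γ^ε_{μν} v_ε)` of a vector field. -/
noncomputable def accel (g : (Fin 4 → ℝ) → Matrix (Fin 4) (Fin 4) ℝ)
    (v : (Fin 4 → ℝ) → Fin 4 → ℝ) (μ : Fin 4) (x : Fin 4 → ℝ) : ℝ :=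
  ∑ ν, v x ν * (pd ν (vlow g v μ) x - ∑ ε, christoffel g ε μ ν x * vlow g v ε x)

/-- The Gödel metric in cylindrical coordinates (t, r, φ, z) = (x⁰, x¹, x², x³). -/
noncomputable def gGodel (a : ℝ) (x : Fin 4 → ℝ) : Matrix (Fin 4) (Fin 4) ℝ :=
  !![a ^ 2, 0, a ^ 2 * Real.sqrt 2 * Real.sinh (x 1) ^ 2, 0;
     0, -a ^ 2, 0, 0;
     a ^ 2 * Real.sqrt 2 * Real.sinh (x 1) ^ 2, 0,
       a ^ 2 * Real.sinh (x 1) ^ 2 * (Real.sinh (x 1) ^ 2 - 1), 0;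
     0, 0, 0, -a ^ 2]

/-- The circular observer `v^μ = (0, 0, 1/(a sinh r √(sinh²r − 1)), 0)`. -/
noncomputable def vGodel (a : ℝ) (x : Fin 4 → ℝ) : Fin 4 → ℝ :=
  ![0, 0, (a * Real.sinh (x 1) * Real.sqrt (Real.sinh (x 1) ^ 2 - 1))⁻¹, 0]

/-! ### Auxiliary lemmas -/

lemma pd_single (f : ℝ → ℝ) {f' : ℝ} (x : Fin 4 → ℝ) (h : HasDerivAt f f' (x 1)) (μ : Fin 4) :
    pd μ (fun y => f (y 1)) x = if μ = 1 then f' else 0 := by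
  have h1 : HasFDerivAt (fun y : Fin 4 → ℝ => y 1)
      (ContinuousLinearMap.proj 1 : (Fin 4 → ℝ) →L[ℝ] ℝ) x := by
    exact (ContinuousLinearMap.proj (R := ℝ) (φ := fun _ : Fin 4 => ℝ) 1).hasFDerivAt (x := x)
  have h2 : HasFDerivAt (fun y : Fin 4 → ℝ => f (y 1))
      (f' • (ContinuousLinearMap.proj 1 : (Fin 4 → ℝ) →L[ℝ] ℝ)) x := h.comp_hasFDerivAt x h1
  rw [pd, h2.fderiv]
  rcases eq_or_ne μ 1 with hμ | hμ
  · simp [hμ]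
  · simp [Pi.single_apply, hμ, Ne.symm hμ]

lemma pd_single' (f : ℝ → ℝ) {f' : ℝ} (x : Fin 4 → ℝ) (h : HasDerivAt f f' (x 1)) (μ : Fin 4)
    {d : ℝ} (hd : f' = d) :
    pd μ (fun y => f (y 1)) x = if μ = 1 then d else 0 := hd ▸ pd_single f x h μ

lemma pd_ne_one (f : ℝ → ℝ) (x : Fin 4 → ℝ) (h : DifferentiableAt ℝ f (x 1)) {μ : Fin 4}
    (hμ : μ ≠ 1) : pd μ (fun y => f (y 1)) x = 0 := by
  simpa [hμ] using pd_single f x h.hasDerivAt μ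

/-- The inverse of the Gödel metric. -/
noncomputable def gInv (a : ℝ) (x : Fin 4 → ℝ) : Matrix (Fin 4) (Fin 4) ℝ :=
  !![-(Real.sinh (x 1)^2-1)/(a^2*(Real.sinh (x 1)^2+1)), 0,
       Real.sqrt 2/(a^2*(Real.sinh (x 1)^2+1)), 0;
     0, -(a^2)⁻¹, 0, 0;
     Real.sqrt 2/(a^2*(Real.sinh (x 1)^2+1)), 0,
       -1/(a^2*Real.sinh (x 1)^2*(Real.sinh (x 1)^2+1)), 0;
     0, 0, 0, -(a^2)⁻¹]

lemma gInv_eq (a : ℝ) (x : Fin 4 → ℝ) (ha : a ≠ 0) (hs : Real.sinh (x 1) ≠ 0) :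
    (gGodel a x)⁻¹ = gInv a x := by
  have hs2 : Real.sinh (x 1)^2 + 1 ≠ 0 := by positivity
  apply Matrix.inv_eq_right_inv
  ext i j
  fin_cases i <;> fin_cases j <;>
    simp [gGodel, gInv, Matrix.mul_apply, Fin.sum_univ_four, Matrix.one_apply,
      Matrix.vecHead, Matrix.vecTail]
  all_goals field_simp
  all_goals ring_nf
  all_goals simp [Real.sq_sqrt (by norm_num : (0:ℝ) ≤ 2)]
  all_goals ring_nf

set_option maxHeartbeats 2000000 in
/-- In the acausal region `r > r_c` (where `sinh²r_c = 1`) of Gödel space-time, the circular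
observer is unit-normalized and its acceleration is
`(0, −cosh r(2sinh²r−1)/(sinh r(sinh²r−1)), 0, 0) = ∂_μ(−ln(sinh r √(sinh²r−1)))`. -/
theorem godel_circular_observer_acceleration (a rc : ℝ) (ha : 0 < a) (hrc : 0 < rc)
    (hrc1 : Real.sinh rc ^ 2 = 1) :
    ∀ x : Fin 4 → ℝ, rc < x 1 →
      (∑ μ, ∑ ν, gGodel a x μ ν * vGodel a x μ * vGodel a x ν = 1) ∧
      (∀ μ : Fin 4, accel (gGodel a) (vGodel a) μ x
          = ![0, -(Real.cosh (x 1) * (2 * Real.sinh (x 1) ^ 2 - 1)) /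
                (Real.sinh (x 1) * (Real.sinh (x 1) ^ 2 - 1)), 0, 0] μ) ∧
      (∀ μ : Fin 4, accel (gGodel a) (vGodel a) μ x
          = pd μ (fun y =>
              -Real.log (Real.sinh (y 1) * Real.sqrt (Real.sinh (y 1) ^ 2 - 1))) x) := by
  intro x hx
  have ha' : a ≠ 0 := ne_of_gt ha
  have hrc' : Real.sinh rc = 1 := by
    have hp : 0 < Real.sinh rc := Real.sinh_pos_iff.mpr hrc
    have h0 : (Real.sinh rc - 1) * (Real.sinh rc + 1) = 0 := by linear_combination hrc1
    rcases mul_eq_zero.1 h0 with h | h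
    · linarith
    · linarith
  have hs1 : 1 < Real.sinh (x 1) := by
    rw [← hrc']; exact Real.sinh_lt_sinh.2 hx
  have hs0 : (0:ℝ) < Real.sinh (x 1) := by linarith
  have hsq1 : 1 < Real.sinh (x 1) ^ 2 := by nlinarith
  have hw2 : Real.sqrt (Real.sinh (x 1) ^ 2 - 1) ^ 2 = Real.sinh (x 1) ^ 2 - 1 :=
    Real.sq_sqrt (by linarith)
  have hwpos : 0 < Real.sqrt (Real.sinh (x 1) ^ 2 - 1) := Real.sqrt_pos.2 (by linarith)
  have h2 : Real.sqrt 2 ^ 2 = 2 := Real.sq_sqrt (by norm_num)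
  -- derivatives of the metric components
  have hpdg : ∀ (ν i j : Fin 4), pd ν (fun y => gGodel a y i j) x =
      if ν = 1 then
        !![0, 0, 2*a^2*Real.sqrt 2*Real.sinh (x 1)*Real.cosh (x 1), 0;
           0, 0, 0, 0;
           2*a^2*Real.sqrt 2*Real.sinh (x 1)*Real.cosh (x 1), 0,
             2*a^2*Real.sinh (x 1)*Real.cosh (x 1)*(2*Real.sinh (x 1)^2-1), 0;
           0, 0, 0, 0] i j
      else 0 := by
    intro ν i j
    have hsinh := Real.hasDerivAt_sinh (x 1)
    fin_cases i <;> fin_cases j <;> simp only [gGodel, Matrix.cons_val', Matrix.cons_val_zero, Matrix.cons_val_one, Matrix.head_cons, Matrix.cons_val_fin_one, Matrix.empty_val', Matrix.tail_cons, Matrix.of_apply, Matrix.cons_val_succ, Fin.mk_zero, Fin.mk_one, Matrix.head_fin_const, show ((⟨2,by norm_num⟩:Fin 4)=2) from rfl, show ((⟨3,by norm_num⟩:Fin 4)=3) from rfl, Matrix.cons_val_two, Matrix.cons_val_three]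
    all_goals first
      | exact pd_single' (fun _ => (0:ℝ)) x (hasDerivAt_const _ _) ν (by norm_num)
      | exact pd_single' (fun _ => a ^ 2) x (hasDerivAt_const _ _) ν (by norm_num)
      | exact pd_single' (fun _ => -a ^ 2) x (hasDerivAt_const _ _) ν (by norm_num)
      | exact pd_single' (fun t => a ^ 2 * Real.sqrt 2 * Real.sinh t ^ 2) x
          ((hsinh.pow 2).const_mul (a ^ 2 * Real.sqrt 2)) ν (by push_cast; ring)
      | exact pd_single' (fun t => a ^ 2 * Real.sinh t ^ 2 * (Real.sinh t ^ 2 - 1)) x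
          (((hsinh.pow 2).const_mul (a ^ 2)).mul ((hsinh.pow 2).sub_const 1)) ν
          (by push_cast; simp only [Pi.pow_apply]; ring)
  have hG : (gGodel a x)⁻¹ = gInv a x := gInv_eq a x ha' (ne_of_gt hs0)
  have hs2 : Real.sinh (x 1)^2 + 1 ≠ 0 := by positivity
  have hchris : ∀ ε μ : Fin 4, christoffel (gGodel a) ε μ 2 x =
      !![0, Real.sqrt 2*Real.sinh (x 1)^3*Real.cosh (x 1)/(Real.sinh (x 1)^2+1), 0, 0;
         Real.sqrt 2*Real.sinh (x 1)*Real.cosh (x 1), 0,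
           Real.sinh (x 1)*Real.cosh (x 1)*(2*Real.sinh (x 1)^2-1), 0;
         0, Real.cosh (x 1)/(Real.sinh (x 1)*(Real.sinh (x 1)^2+1)), 0, 0;
         0, 0, 0, 0] ε μ := by
    intro ε μ
    simp only [christoffel, Fin.sum_univ_four, hG]
    fin_cases ε <;> fin_cases μ <;>
      simp [gInv, hpdg, Matrix.vecHead, Matrix.vecTail]
    all_goals try field_simp
    all_goals try ring_nf
    all_goals try simp [h2]
    all_goals try ring_nf
  -- covariant components as functions
  have hv0 : vlow (gGodel a) (vGodel a) 0 = fun y =>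
      a ^ 2 * Real.sqrt 2 * Real.sinh (y 1) ^ 2 *
        (a * Real.sinh (y 1) * Real.sqrt (Real.sinh (y 1) ^ 2 - 1))⁻¹ := by
    funext y; simp [vlow, gGodel, vGodel, Fin.sum_univ_four]
  have hv1 : vlow (gGodel a) (vGodel a) 1 = fun _ => 0 := by
    funext y; simp [vlow, gGodel, vGodel, Fin.sum_univ_four]
  have hv2 : vlow (gGodel a) (vGodel a) 2 = fun y =>
      a ^ 2 * Real.sinh (y 1) ^ 2 * (Real.sinh (y 1) ^ 2 - 1) *
        (a * Real.sinh (y 1) * Real.sqrt (Real.sinh (y 1) ^ 2 - 1))⁻¹ := by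
    funext y; simp [vlow, gGodel, vGodel, Fin.sum_univ_four]
  have hv3 : vlow (gGodel a) (vGodel a) 3 = fun _ => 0 := by
    funext y; simp [vlow, gGodel, vGodel, Fin.sum_univ_four]
  -- differentiability data
  have hdsq : DifferentiableAt ℝ (fun t => Real.sinh t ^ 2) (x 1) :=
    (Real.differentiable_sinh.differentiableAt).pow 2
  have hdw : DifferentiableAt ℝ (fun t => Real.sqrt (Real.sinh t ^ 2 - 1)) (x 1) :=
    (hdsq.sub_const 1).sqrt (by nlinarith)
  have hdenom : DifferentiableAt ℝ
      (fun t => a * Real.sinh t * Real.sqrt (Real.sinh t ^ 2 - 1)) (x 1) :=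
    (Real.differentiable_sinh.differentiableAt.const_mul a).mul hdw
  have hne : a * Real.sinh (x 1) * Real.sqrt (Real.sinh (x 1) ^ 2 - 1) ≠ 0 :=
    ne_of_gt (mul_pos (mul_pos ha hs0) hwpos)
  have hpdv : ∀ μ : Fin 4, pd 2 (vlow (gGodel a) (vGodel a) μ) x = 0 := by
    intro μ
    fin_cases μ
    · show pd 2 (vlow (gGodel a) (vGodel a) 0) x = 0
      rw [hv0]
      exact pd_ne_one (fun t => a ^ 2 * Real.sqrt 2 * Real.sinh t ^ 2 *
        (a * Real.sinh t * Real.sqrt (Real.sinh t ^ 2 - 1))⁻¹) x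
        ((hdsq.const_mul (a ^ 2 * Real.sqrt 2)).mul (hdenom.inv hne)) (by decide)
    · show pd 2 (vlow (gGodel a) (vGodel a) 1) x = 0
      rw [hv1]; exact pd_ne_one (fun _ => 0) x (differentiableAt_const 0) (by decide)
    · show pd 2 (vlow (gGodel a) (vGodel a) 2) x = 0
      rw [hv2]
      exact pd_ne_one (fun t => a ^ 2 * Real.sinh t ^ 2 * (Real.sinh t ^ 2 - 1) *
        (a * Real.sinh t * Real.sqrt (Real.sinh t ^ 2 - 1))⁻¹) x
        (((hdsq.const_mul (a ^ 2)).mul (hdsq.sub_const 1)).mul (hdenom.inv hne)) (by decide)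
    · show pd 2 (vlow (gGodel a) (vGodel a) 3) x = 0
      rw [hv3]; exact pd_ne_one (fun _ => 0) x (differentiableAt_const 0) (by decide)
  have hvlx : ∀ ε : Fin 4, vlow (gGodel a) (vGodel a) ε x =
      ![a ^ 2 * Real.sqrt 2 * Real.sinh (x 1) ^ 2 *
          (a * Real.sinh (x 1) * Real.sqrt (Real.sinh (x 1) ^ 2 - 1))⁻¹, 0,
        a ^ 2 * Real.sinh (x 1) ^ 2 * (Real.sinh (x 1) ^ 2 - 1) *
          (a * Real.sinh (x 1) * Real.sqrt (Real.sinh (x 1) ^ 2 - 1))⁻¹, 0] ε := by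
    intro ε
    fin_cases ε <;>
      simp [vlow, gGodel, vGodel, Fin.sum_univ_four, Matrix.vecHead, Matrix.vecTail]
  have hacc : ∀ μ : Fin 4, accel (gGodel a) (vGodel a) μ x
      = ![0, -(Real.cosh (x 1) * (2 * Real.sinh (x 1) ^ 2 - 1)) /
            (Real.sinh (x 1) * (Real.sinh (x 1) ^ 2 - 1)), 0, 0] μ := by
    intro μ
    have h0 : vGodel a x 0 = 0 := rfl
    have h1' : vGodel a x 1 = 0 := rfl
    have h3 : vGodel a x 3 = 0 := rfl
    simp only [accel, Fin.sum_univ_four]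
    rw [h0, h1', h3, hpdv μ]
    simp only [zero_mul, add_zero, zero_add, hchris, hvlx]
    fin_cases μ <;>
      simp [vGodel, Matrix.vecHead, Matrix.vecTail]
    have hSne : Real.sinh (x 1) ≠ 0 := ne_of_gt hs0
    have hWne : Real.sqrt (Real.sinh (x 1) ^ 2 - 1) ≠ 0 := ne_of_gt hwpos
    have hS1ne : Real.sinh (x 1) ^ 2 - 1 ≠ 0 := by nlinarith
    field_simp
    ring_nf
    have hw2' : Real.sqrt (-1 + Real.sinh (x 1) ^ 2) ^ 2 = -1 + Real.sinh (x 1) ^ 2 :=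
      Real.sq_sqrt (by nlinarith)
    have hw3 : Real.sqrt (-1 + Real.sinh (x 1) ^ 2) ^ 3
        = (-1 + Real.sinh (x 1) ^ 2) * Real.sqrt (-1 + Real.sinh (x 1) ^ 2) := by
      rw [pow_succ, hw2']
    rw [hw2', h2]
    try ring
  have hSne : Real.sinh (x 1) ≠ 0 := ne_of_gt hs0
  have hWne : Real.sqrt (Real.sinh (x 1) ^ 2 - 1) ≠ 0 := ne_of_gt hwpos
  have hS1ne : Real.sinh (x 1) ^ 2 - 1 ≠ 0 := by nlinarith
  refine ⟨?_, hacc, fun μ => ?_⟩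
  · simp [gGodel, vGodel, Fin.sum_univ_four, Matrix.vecHead, Matrix.vecTail]
    field_simp
    ring_nf
    have hw2' : Real.sqrt (-1 + Real.sinh (x 1) ^ 2) ^ 2 = -1 + Real.sinh (x 1) ^ 2 :=
      Real.sq_sqrt (by nlinarith)
    rw [hw2']
  · rw [hacc μ]
    have hwD : HasDerivAt (fun t => Real.sqrt (Real.sinh t ^ 2 - 1))
        (((2:ℕ) * Real.sinh (x 1) ^ (2-1) * Real.cosh (x 1)) /
          (2 * Real.sqrt (Real.sinh (x 1) ^ 2 - 1))) (x 1) :=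
      (((Real.hasDerivAt_sinh (x 1)).pow 2).sub_const 1).sqrt (by simp only [Pi.pow_apply]; nlinarith)
    have hprod := (Real.hasDerivAt_sinh (x 1)).mul hwD
    have hPne : Real.sinh (x 1) * Real.sqrt (Real.sinh (x 1) ^ 2 - 1) ≠ 0 :=
      ne_of_gt (mul_pos hs0 hwpos)
    have hlog := (hprod.log hPne).neg
    have hps : pd μ (fun y => -Real.log (Real.sinh (y 1) *
        Real.sqrt (Real.sinh (y 1) ^ 2 - 1))) x
        = if μ = 1 then -((Real.cosh (x 1) * Real.sqrt (Real.sinh (x 1) ^ 2 - 1) +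
            Real.sinh (x 1) * (((2:ℕ) * Real.sinh (x 1) ^ (2-1) * Real.cosh (x 1)) /
              (2 * Real.sqrt (Real.sinh (x 1) ^ 2 - 1)))) /
            (Real.sinh (x 1) * Real.sqrt (Real.sinh (x 1) ^ 2 - 1))) else 0 :=
      pd_single' (fun t => -Real.log (Real.sinh t * Real.sqrt (Real.sinh t ^ 2 - 1))) x
        hlog μ rfl
    rw [hps]
    fin_cases μ <;> simp
    field_simp
    ring_nf
    have hw2' : Real.sqrt (-1 + Real.sinh (x 1) ^ 2) ^ 2 = -1 + Real.sinh (x 1) ^ 2 :=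
      Real.sq_sqrt (by nlinarith)
    rw [hw2']
    ring
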